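/- Let G be a graph with minimum degree at least 2 such that every edge joins a vertex of degree 2 to a vertex of degree at least 3. Then the maximum number of edges coverable by two disjoint matchings equals twice the number of vertices of degree at least 3, i.e. ν₂(G) = 2·|{v : d(v) ≥ 3}|. -/

import Mathlib

structure Multigraph where
  V : Type
  E : Type
  fintypeV : Fintype V
  decEqV : DecidableEq V
  fintypeE : Fintype E
  decEqE : DecidableEq E
  ends : E → Sym2 V

attribute [instance] Multigraph.fintypeV Multigraph.decEqV Multigraph.fintypeE Multigraph.decEqE

namespace Multigraph

/-- `e` is a loop if both of its endpoints coincide. -/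
def IsLoop (G : Multigraph) (e : G.E) : Prop := (G.ends e).IsDiag

/-- A loopless multigraph. -/
def Loopless (G : Multigraph) : Prop := ∀ e, ¬ G.IsLoop e

/-- Degree of a vertex: loops count twice. -/
def deg (G : Multigraph) (v : G.V) : ℕ :=
  ∑ e : G.E, (if G.ends e = Sym2.diag v then 2 else if v ∈ G.ends e then 1 else 0)

/-- Adjacency via some edge. -/
def Adj (G : Multigraph) (u v : G.V) : Prop := ∃ e, G.ends e = s(u, v)

/-- Connectivity. -/
def Connected (G : Multigraph) : Prop := ∀ u v : G.V, Relation.ReflTransGen G.Adj u v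

/-- A matching: a set of non-loop edges no two of which share an endpoint. -/
def IsMatching (G : Multigraph) (M : Finset G.E) : Prop :=
  (∀ e ∈ M, ¬ G.IsLoop e) ∧
  ∀ e ∈ M, ∀ f ∈ M, e ≠ f → ∀ v : G.V, v ∈ G.ends e → v ∉ G.ends f

/-- A maximum matching. -/
def IsMaximumMatching (G : Multigraph) (M : Finset G.E) : Prop :=
  G.IsMatching M ∧ ∀ M' : Finset G.E, G.IsMatching M' → M'.card ≤ M.card

/-- `v` is saturated by `M`. -/
def Saturated (G : Multigraph) (M : Finset G.E) (v : G.V) : Prop :=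
  ∃ e ∈ M, v ∈ G.ends e

/-- Size of a maximum matching. -/
noncomputable def nu1 (G : Multigraph) : ℕ :=
  sSup {m | ∃ M : Finset G.E, G.IsMatching M ∧ M.card = m}

/-- Max number of edges coverable by two disjoint matchings. -/
noncomputable def nu2 (G : Multigraph) : ℕ :=
  sSup {m | ∃ H H' : Finset G.E, G.IsMatching H ∧ G.IsMatching H' ∧
    Disjoint H H' ∧ H.card + H'.card = m}

/-- Max number of edges coverable by three pairwise disjoint matchings. -/
noncomputable def nu3 (G : Multigraph) : ℕ :=
  sSup {m | ∃ H₁ H₂ H₃ : Finset G.E, G.IsMatching H₁ ∧ G.IsMatching H₂ ∧ G.IsMatching H₃ ∧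
    Disjoint H₁ H₂ ∧ Disjoint H₁ H₃ ∧ Disjoint H₂ H₃ ∧ H₁.card + H₂.card + H₃.card = m}

/-- Subdividing the edge `e`, with endpoints `u`, `v`, once: replace it by a path `u - w - v`
through a new vertex `w`. -/
def subdivideOnce (G : Multigraph) (e : G.E) (u v : G.V) : Multigraph where
  V := G.V ⊕ Unit
  E := {f : G.E // f ≠ e} ⊕ Bool
  fintypeV := inferInstance
  decEqV := inferInstance
  fintypeE := inferInstance
  decEqE := inferInstance
  ends := fun f =>
    match f with
    | Sum.inl ⟨f, _⟩ => (G.ends f).map Sum.inl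
    | Sum.inr true => s(Sum.inl u, Sum.inr ())
    | Sum.inr false => s(Sum.inl v, Sum.inr ())

/-- Subdividing every edge `e` exactly `k e` times, where `fst`/`snd` pick out the endpoints
of every edge. The edge `e` is replaced by the path
`fst e, (e,0), (e,1), …, (e, k e - 1), snd e` of length `k e + 1`. -/
def subdivide (G : Multigraph) (fst snd : G.E → G.V) (k : G.E → ℕ) : Multigraph where
  V := G.V ⊕ (Σ e : G.E, Fin (k e))
  E := Σ e : G.E, Fin (k e + 1)
  fintypeV := inferInstance
  decEqV := inferInstance
  fintypeE := inferInstance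
  decEqE := inferInstance
  ends := fun f =>
    s( if h : f.2.val = 0 then Sum.inl (fst f.1)
       else Sum.inr ⟨f.1, ⟨f.2.val - 1, by omega⟩⟩,
       if h : f.2.val = k f.1 then Sum.inl (snd f.1)
       else Sum.inr ⟨f.1, ⟨f.2.val, by have := f.2.isLt; omega⟩⟩ )


lemma deg_eq_card (G : Multigraph) (hl : G.Loopless) (v : G.V) :
    G.deg v = (Finset.univ.filter (fun e => v ∈ G.ends e)).card := by
  unfold deg
  rw [Finset.card_filter]
  apply Finset.sum_congr rfl
  intro e _
  have h : G.ends e ≠ Sym2.diag v := fun h => hl e (by rw [IsLoop, h]; exact Sym2.diag_isDiag v)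
  simp [h]

lemma exists_saturating_matching (G : Multigraph)
    (aE bE : G.E → G.V)
    (hab : ∀ e, G.ends e = s(aE e, bE e))
    (ha : ∀ e, G.deg (aE e) = 2)
    (hb : ∀ e, 3 ≤ G.deg (bE e))
    (hl : G.Loopless)
    (F : Finset G.E)
    (hF : ∀ b : G.V, 3 ≤ G.deg b → 2 ≤ (F.filter (fun e => bE e = b)).card) :
    ∃ M : Finset G.E, M ⊆ F ∧ G.IsMatching M ∧
      M.card = (Finset.univ.filter (fun v : G.V => 3 ≤ G.deg v)).card := by
  classical
  set B : Finset G.V := Finset.univ.filter (fun v : G.V => 3 ≤ G.deg v) with hB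
  set t : {b // b ∈ B} → Finset G.V :=
    fun b => (F.filter (fun e => bE e = b.1)).image aE with ht
  have hdegB : ∀ b : {b // b ∈ B}, 3 ≤ G.deg b.1 := by
    intro b
    have := b.2
    simp only [hB, Finset.mem_filter] at this
    exact this.2
  -- Hall condition
  have hall : ∀ s : Finset {b // b ∈ B}, s.card ≤ (s.biUnion t).card := by
    intro s
    set Es : Finset G.E := s.biUnion (fun b => F.filter (fun e => bE e = b.1)) with hEs
    have hcard : 2 * s.card ≤ Es.card := by
      rw [hEs, Finset.card_biUnion]
      · calc 2 * s.card = ∑ _b ∈ s, 2 := by simp [mul_comm]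
          _ ≤ _ := Finset.sum_le_sum (fun b _ => hF b.1 (hdegB b))
      · intro b1 _ b2 _ hne
        simp only [Finset.disjoint_left, Finset.mem_filter]
        rintro e ⟨_, h1⟩ ⟨_, h2⟩
        exact hne (Subtype.ext (h1 ▸ h2))
    have hcard2 : Es.card ≤ 2 * (s.biUnion t).card := by
      apply Finset.card_le_mul_card_image_of_maps_to (f := aE) (t := s.biUnion t)
      · intro e he
        rw [hEs, Finset.mem_biUnion] at he
        obtain ⟨b, hbs, hbe⟩ := he
        rw [Finset.mem_biUnion]
        exact ⟨b, hbs, Finset.mem_image_of_mem _ hbe⟩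
      · intro a hat
        rw [Finset.mem_biUnion] at hat
        obtain ⟨b, _, hbt⟩ := hat
        rw [ht, Finset.mem_image] at hbt
        obtain ⟨e0, _, he0⟩ := hbt
        have hdega : G.deg a = 2 := he0 ▸ ha e0
        calc (Es.filter (fun e => aE e = a)).card
            ≤ (Finset.univ.filter (fun e => a ∈ G.ends e)).card := by
              apply Finset.card_le_card
              intro e he
              rw [Finset.mem_filter] at he ⊢
              refine ⟨Finset.mem_univ _, ?_⟩
              rw [hab e, ← he.2]
              simp [Sym2.mem_iff]
          _ = 2 := by rw [← G.deg_eq_card hl, hdega]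
    omega
  obtain ⟨f, hfinj, hft⟩ := (Finset.all_card_le_biUnion_card_iff_exists_injective t).mp hall
  -- choose edges
  have hch : ∀ b : {b // b ∈ B}, ∃ e, e ∈ F ∧ bE e = b.1 ∧ aE e = f b := by
    intro b
    have := hft b
    rw [ht, Finset.mem_image] at this
    obtain ⟨e, he, hae⟩ := this
    rw [Finset.mem_filter] at he
    exact ⟨e, he.1, he.2, hae⟩
  choose g hgF hgb hga using hch
  refine ⟨Finset.univ.image g, ?_, ⟨?_, ?_⟩, ?_⟩
  · intro e he
    rw [Finset.mem_image] at he
    obtain ⟨b, _, rfl⟩ := he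
    exact hgF b
  · rintro e he
    rw [Finset.mem_image] at he
    obtain ⟨b, _, rfl⟩ := he
    intro hloop
    rw [IsLoop, hab, Sym2.mk_isDiag_iff] at hloop
    have h1 := ha (g b); have h2 := hb (g b); rw [hloop] at h1; omega
  · rintro e he e' he' hne v hv hv'
    rw [Finset.mem_image] at he he'
    obtain ⟨b, _, rfl⟩ := he
    obtain ⟨b', _, rfl⟩ := he'
    have hbb : b ≠ b' := by rintro rfl; exact hne rfl
    rw [hab, Sym2.mem_iff] at hv hv'
    rcases hv with rfl | rfl <;> rcases hv' with h | h
    · exact hbb (hfinj (by rw [← hga b, ← hga b', h]))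
    · have := ha (g b); have := hb (g b'); rw [← h] at this; omega
    · have := hb (g b); have := ha (g b'); rw [← h] at this; omega
    · exact hbb (Subtype.ext (by rw [← hgb b, ← hgb b', h]))
  · have ginj : Function.Injective g := by
      intro b b' hgg
      apply Subtype.ext
      rw [← hgb b, ← hgb b', hgg]
    rw [Finset.card_image_of_injective _ ginj, Finset.card_univ, Fintype.card_coe]

/-- If δ(G) ≥ 2 and every edge joins a degree-2 vertex to a vertex of degree
at least 3, then ν₂(G) equals twice the number of vertices of degree at least 3. -/
theorem nu2_eq_two_mul_card_deg_ge_three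
    (G : Multigraph) (hloopless : G.Loopless)
    (hδ : ∀ v : G.V, 2 ≤ G.deg v)
    (hedge : ∀ e : G.E, ∃ u v : G.V, G.ends e = s(u, v) ∧ G.deg u = 2 ∧ 3 ≤ G.deg v) :
    G.nu2 = 2 * (Finset.univ.filter (fun v : G.V => 3 ≤ G.deg v)).card := by
  classical
  choose aE bE hab ha hb using hedge
  set B : Finset G.V := Finset.univ.filter (fun v : G.V => 3 ≤ G.deg v) with hB
  have hmem : ∀ (b : G.V), 3 ≤ G.deg b → ∀ e, b ∈ G.ends e ↔ bE e = b := by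
    intro b hb3 e
    constructor
    · intro h
      rw [hab e, Sym2.mem_iff] at h
      rcases h with rfl | rfl
      · have := ha e; omega
      · rfl
    · intro h; rw [hab e, ← h]; simp
  have hcardeq : ∀ b : G.V, 3 ≤ G.deg b →
      ((Finset.univ : Finset G.E).filter (fun e => bE e = b)).card = G.deg b := by
    intro b hb3
    have h : (Finset.univ.filter (fun e => bE e = b))
        = Finset.univ.filter (fun e => b ∈ G.ends e) := by
      apply Finset.filter_congr
      intro e _
      exact (hmem b hb3 e).symm
    rw [h, ← G.deg_eq_card hloopless]
  have hFuniv : ∀ b : G.V, 3 ≤ G.deg b →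
      2 ≤ ((Finset.univ : Finset G.E).filter (fun e => bE e = b)).card := by
    intro b hb3; rw [hcardeq b hb3]; omega
  obtain ⟨M₁, -, hM₁m, hM₁c⟩ :=
    G.exists_saturating_matching aE bE hab ha hb hloopless Finset.univ hFuniv
  have hF2 : ∀ b : G.V, 3 ≤ G.deg b →
      2 ≤ ((Finset.univ \ M₁).filter (fun e => bE e = b)).card := by
    intro b hb3
    have hsplit : ((Finset.univ : Finset G.E).filter (fun e => bE e = b)).card
        = (M₁.filter (fun e => bE e = b)).card
          + ((Finset.univ \ M₁).filter (fun e => bE e = b)).card := by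
      rw [← Finset.card_union_of_disjoint
        (Finset.disjoint_filter_filter Finset.disjoint_sdiff),
        ← Finset.filter_union, Finset.union_sdiff_of_subset (Finset.subset_univ _)]
    have h1 : (M₁.filter (fun e => bE e = b)).card ≤ 1 := by
      rw [Finset.card_le_one]
      intro e he f hf
      rw [Finset.mem_filter] at he hf
      by_contra hne
      exact hM₁m.2 e he.1 f hf.1 hne b ((hmem b hb3 e).mpr he.2) ((hmem b hb3 f).mpr hf.2)
    have h3 := hcardeq b hb3
    omega
  obtain ⟨M₂, hM₂F, hM₂m, hM₂c⟩ :=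
    G.exists_saturating_matching aE bE hab ha hb hloopless _ hF2
  have hdisj : Disjoint M₁ M₂ :=
    Finset.disjoint_left.mpr (fun e h1 h2 => (Finset.mem_sdiff.mp (hM₂F h2)).2 h1)
  rw [← hB] at hM₁c hM₂c
  have hub : ∀ H : Finset G.E, G.IsMatching H → H.card ≤ B.card := by
    intro H hH
    apply Finset.card_le_card_of_injOn bE
    · intro e _
      rw [hB, Finset.mem_coe, Finset.mem_filter]
      exact ⟨Finset.mem_univ _, hb e⟩
    · intro e he f hf hef
      by_contra hne
      exact hH.2 e (Finset.mem_coe.mp he) f (Finset.mem_coe.mp hf) hne (bE e)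
        (by rw [hab]; simp) (by rw [hab f, hef]; simp)
  have hmemS : 2 * B.card ∈ {m | ∃ H H' : Finset G.E, G.IsMatching H ∧ G.IsMatching H' ∧
      Disjoint H H' ∧ H.card + H'.card = m} :=
    ⟨M₁, M₂, hM₁m, hM₂m, hdisj, by omega⟩
  have hbound : ∀ m ∈ {m | ∃ H H' : Finset G.E, G.IsMatching H ∧ G.IsMatching H' ∧
      Disjoint H H' ∧ H.card + H'.card = m}, m ≤ 2 * B.card := by
    rintro m ⟨H, H', hH, hH', -, rfl⟩
    have := hub H hH; have := hub H' hH'; omega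
  rw [nu2]
  exact le_antisymm (csSup_le ⟨_, hmemS⟩ hbound) (le_csSup ⟨2 * B.card, hbound⟩ hmemS)


end Multigraph
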